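/- Let S be a real symmetric positive definite n×n matrix, L an invertible n×n matrix with S = L Lᵀ, ΔS a real symmetric n×n matrix, and B := L⁻¹ ΔS L⁻ᵀ. Then for every α ∈ (0,1) such that S + αΔS and S − (α/(1−α))ΔS are positive definite, the matrix Iₙ − (α²/(1−α))(B + B²) is positive definite and −ln det(S + αΔS) − ln det( S − (α/(1−α))ΔS ) + 2·ln det S = −ln det( Iₙ − (α²/(1−α))(B + B²) ). -/

import Mathlib

open Matrix

open scoped MatrixOrder

lemma posDef_conj_aux {n : ℕ} {A C : Matrix (Fin n) (Fin n) ℝ}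
    (hA : A.PosDef) (hC : IsUnit C.det) : (Cᵀ * A * C).PosDef := by
  rw [← conjTranspose_eq_transpose_of_trivial]
  exact hA.conjTranspose_mul_mul_same
    (Matrix.mulVec_injective_iff_isUnit.mpr ((Matrix.isUnit_iff_isUnit_det C).2 hC))


/-- representation (8.8)–(8.9) of the paper. Let `S = L Lᵀ` be symmetric
positive definite with `L` invertible, `ΔS` symmetric, and `B = L⁻¹ ΔS L⁻ᵀ`.  Then for every
`α ∈ (0,1)` with `S + αΔS` and `S - (α/(1-α))ΔS` positive definite, the matrix
`I - (α²/(1-α))(B + B²)` is positive definite and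
`-ln det(S + αΔS) - ln det(S - (α/(1-α))ΔS) + 2 ln det S = -ln det(I - (α²/(1-α))(B + B²))`. -/
theorem stmt12 {n : ℕ}
    (S : Matrix (Fin n) (Fin n) ℝ) (hS : S.PosDef)
    (L : Matrix (Fin n) (Fin n) ℝ) (hL : IsUnit L.det) (hSL : S = L * Lᵀ)
    (ΔS : Matrix (Fin n) (Fin n) ℝ) (hΔS : ΔS.IsSymm)
    (B : Matrix (Fin n) (Fin n) ℝ) (hB : B = L⁻¹ * ΔS * (L⁻¹)ᵀ)
    (α : ℝ) (hα : α ∈ Set.Ioo (0 : ℝ) 1)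
    (h1 : (S + α • ΔS).PosDef) (h2 : (S - (α / (1 - α)) • ΔS).PosDef) :
    ((1 : Matrix (Fin n) (Fin n) ℝ) - (α ^ 2 / (1 - α)) • (B + B * B)).PosDef ∧
    -Real.log (S + α • ΔS).det - Real.log (S - (α / (1 - α)) • ΔS).det
        + 2 * Real.log S.det
      = -Real.log ((1 : Matrix (Fin n) (Fin n) ℝ)
          - (α ^ 2 / (1 - α)) • (B + B * B)).det := by
  obtain ⟨hα0, hα1⟩ := hα
  have h1α : (1 : ℝ) - α ≠ 0 := by linarith
  set β : ℝ := α / (1 - α) with hβ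
  set c : ℝ := α ^ 2 / (1 - α) with hc
  set P : Matrix (Fin n) (Fin n) ℝ := 1 + α • B with hPdef
  set Q : Matrix (Fin n) (Fin n) ℝ := 1 - β • B with hQdef
  have hLdet : L.det ≠ 0 := hL.ne_zero
  have hLinv : L⁻¹ * L = 1 := nonsing_inv_mul L hL
  have hLT : (L⁻¹)ᵀ = (Lᵀ)⁻¹ := transpose_nonsing_inv L
  have hLTinv : Lᵀ * (L⁻¹)ᵀ = 1 := by
    rw [hLT, mul_nonsing_inv]; rwa [det_transpose, isUnit_iff_ne_zero]
  -- congruence identities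
  have hPeq : L⁻¹ * (S + α • ΔS) * (L⁻¹)ᵀ = P := by
    rw [hSL, hPdef, hB]
    rw [Matrix.mul_add, Matrix.add_mul, Matrix.mul_smul, Matrix.smul_mul]
    rw [show L⁻¹ * (L * Lᵀ) * L⁻¹ᵀ = L⁻¹ * L * (Lᵀ * L⁻¹ᵀ) by
      rw [Matrix.mul_assoc, Matrix.mul_assoc, Matrix.mul_assoc], hLinv, hLTinv, Matrix.one_mul]
  have hQeq : L⁻¹ * (S - β • ΔS) * (L⁻¹)ᵀ = Q := by
    rw [hSL, hQdef, hB]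
    rw [Matrix.mul_sub, Matrix.sub_mul, Matrix.mul_smul, Matrix.smul_mul]
    rw [show L⁻¹ * (L * Lᵀ) * L⁻¹ᵀ = L⁻¹ * L * (Lᵀ * L⁻¹ᵀ) by
      rw [Matrix.mul_assoc, Matrix.mul_assoc, Matrix.mul_assoc], hLinv, hLTinv, Matrix.one_mul]
  have hdetLinv : IsUnit (L⁻¹)ᵀ.det := by
    rw [det_transpose, det_nonsing_inv]
    simpa using hL
  have hP : P.PosDef := by
    rw [← hPeq, show L⁻¹ = ((L⁻¹)ᵀ)ᵀ by rw [transpose_transpose]]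
    exact posDef_conj_aux h1 hdetLinv
  have hQ : Q.PosDef := by
    rw [← hQeq, show L⁻¹ = ((L⁻¹)ᵀ)ᵀ by rw [transpose_transpose]]
    exact posDef_conj_aux h2 hdetLinv
  -- key algebraic identity P * Q = 1 - c • (B + B²)
  have hαβ : α * β = c := by rw [hβ, hc]; field_simp
  have hαmβ : α - β = -c := by rw [hβ, hc]; field_simp; ring
  have e1 : P * Q = 1 + (α - β) • B - (β * α) • (B * B) := by
    rw [hPdef, hQdef]
    simp only [Matrix.mul_sub, Matrix.add_mul, Matrix.mul_one, Matrix.one_mul,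
      Matrix.mul_smul, Matrix.smul_mul, smul_smul, sub_smul, smul_add]
    abel
  have hPQ : P * Q = 1 - c • (B + B * B) := by
    rw [e1, hαmβ, mul_comm β α, hαβ, smul_add]
    module
  -- P is an affine combination of 1 and Q
  have hPQcomm : P = (2 - α) • (1 : Matrix (Fin n) (Fin n) ℝ) - (1 - α) • Q := by
    have hb : (1 - α) * β = α := by rw [hβ]; field_simp
    rw [hPdef, hQdef, smul_sub, smul_smul, hb]
    module
  -- square root of Q
  set R : Matrix (Fin n) (Fin n) ℝ := CFC.sqrt Q with hRdef
  have hRR : R * R = Q := CFC.sqrt_mul_sqrt_self Q hQ.posSemidef.nonneg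
  have hRsymm : Rᵀ = R := by
    rw [← conjTranspose_eq_transpose_of_trivial]
    exact (CFC.sqrt_nonneg Q).posSemidef.1
  have hRdet : IsUnit R.det := by
    have hd : R.det * R.det = Q.det := by rw [← det_mul, hRR]
    rw [isUnit_iff_ne_zero]
    intro h0
    rw [h0, mul_zero] at hd
    exact hQ.det_pos.ne' hd.symm
  have hRQ : R * Q = Q * R := by
    rw [← hRR, ← Matrix.mul_assoc]
  have hRP : P * R = R * P := by
    rw [hPQcomm, Matrix.sub_mul, Matrix.mul_sub, Matrix.smul_mul, Matrix.mul_smul,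
      Matrix.smul_mul, Matrix.mul_smul, Matrix.one_mul, Matrix.mul_one, hRQ]
  have hMeq : (1 : Matrix (Fin n) (Fin n) ℝ) - c • (B + B * B) = Rᵀ * P * R := by
    rw [hRsymm]
    calc (1 : Matrix (Fin n) (Fin n) ℝ) - c • (B + B * B) = P * Q := hPQ.symm
      _ = P * (R * R) := by rw [hRR]
      _ = P * R * R := by rw [Matrix.mul_assoc]
      _ = R * P * R := by rw [hRP]
  have hMpd : ((1 : Matrix (Fin n) (Fin n) ℝ) - c • (B + B * B)).PosDef := by
    rw [hMeq]
    exact posDef_conj_aux hP hRdet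
  refine ⟨hMpd, ?_⟩
  -- determinant identities
  have hdS : S.det = L.det * L.det := by rw [hSL, det_mul, det_transpose]
  have hdP : (S + α • ΔS).det = S.det * P.det := by
    have h := congrArg det hPeq
    rw [det_mul, det_mul, det_nonsing_inv, det_transpose, det_nonsing_inv, Ring.inverse_eq_inv] at h
    rw [hdS]
    field_simp at h
    linarith [h]
  have hdQ : (S - β • ΔS).det = S.det * Q.det := by
    have h := congrArg det hQeq
    rw [det_mul, det_mul, det_nonsing_inv, det_transpose, det_nonsing_inv, Ring.inverse_eq_inv] at h
    rw [hdS]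
    field_simp at h
    linarith [h]
  have hdM : ((1 : Matrix (Fin n) (Fin n) ℝ) - c • (B + B * B)).det = P.det * Q.det := by
    rw [← hPQ, det_mul]
  have hSne : S.det ≠ 0 := hS.det_pos.ne'
  have hPne : P.det ≠ 0 := hP.det_pos.ne'
  have hQne : Q.det ≠ 0 := hQ.det_pos.ne'
  rw [hdP, hdQ, hdM, Real.log_mul hSne hPne, Real.log_mul hSne hQne,
    Real.log_mul hPne hQne]
  ring
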